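/- Let g : ℝ^p → ℝ be strictly concave and differentiable, and let h : ℝ^p → ℝ be differentiable. Let β̂, β̂' ∈ ℝ^p and suppose there exists β* ∈ ℝ^p that is simultaneously a maximizer of the function β ↦ g(β − β̂) + h(β) and a maximizer of the function β ↦ g(β − β̂') + h(β) over ℝ^p. Then β̂ = β̂'. -/

import Mathlib

open Set

lemma strictConcaveOn_line {E : Type*} [NormedAddCommGroup E] [NormedSpace ℝ E]
    {g : E → ℝ} (hg : StrictConcaveOn ℝ Set.univ g) {x v : E} (hv : v ≠ 0) :
    StrictConcaveOn ℝ Set.univ (fun t : ℝ => g (x + t • v)) := by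
  refine ⟨convex_univ, fun a _ b _ hab w₁ w₂ hw₁ hw₂ hw => ?_⟩
  have hpt : w₁ • (x + a • v) + w₂ • (x + b • v) = x + (w₁ • a + w₂ • b) • v := by
    simp only [smul_eq_mul]
    match_scalars
    · linear_combination hw
    · ring
  have hne : x + a • v ≠ x + b • v := fun hcontra =>
    hab (smul_left_injective ℝ hv (add_left_cancel hcontra))
  have h2 := hg.2 (Set.mem_univ (x + a • v)) (Set.mem_univ (x + b • v)) hne hw₁ hw₂ hw
  rw [hpt] at h2
  exact h2

lemma strictConcave_fderiv_injective {E : Type*} [NormedAddCommGroup E] [NormedSpace ℝ E]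
    {g : E → ℝ} (hg : StrictConcaveOn ℝ Set.univ g) (hdiff : Differentiable ℝ g)
    {x y : E} (hxy : x ≠ y) : fderiv ℝ g x ≠ fderiv ℝ g y := by
  intro heq
  set v : E := y - x with hv
  have hv0 : v ≠ 0 := sub_ne_zero.mpr (Ne.symm hxy)
  set φ : ℝ → ℝ := fun t => g (x + t • v) with hφ
  have hφconc : StrictConcaveOn ℝ Set.univ φ := strictConcaveOn_line hg hv0
  have hline : ∀ t : ℝ, HasDerivAt (fun s : ℝ => x + s • v) v t := fun t => by
    simpa using ((hasDerivAt_id t).smul_const v).const_add x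
  have hφderiv : ∀ t : ℝ, HasDerivAt φ ((fderiv ℝ g (x + t • v)) v) t := fun t =>
    (hdiff (x + t • v)).hasFDerivAt.comp_hasDerivAt t (hline t)
  have hφdiff : ∀ t : ℝ, DifferentiableAt ℝ φ t := fun t => (hφderiv t).differentiableAt
  have hanti := hφconc.strictAntiOn_deriv (fun t _ => hφdiff t)
  have h01 : deriv φ 1 < deriv φ 0 := hanti (Set.mem_univ 0) (Set.mem_univ 1) zero_lt_one
  rw [(hφderiv 0).deriv, (hφderiv 1).deriv] at h01
  simp only [zero_smul, add_zero, one_smul] at h01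
  have hxv : x + v = y := by rw [hv]; abel
  rw [hxv, ← heq] at h01
  exact lt_irrefl _ h01

/-- If `g : ℝ^p → ℝ` is strictly concave and differentiable and
`h : ℝ^p → ℝ` is differentiable, and some `β*` simultaneously maximizes
`β ↦ g(β − β̂) + h(β)` and `β ↦ g(β − β̂') + h(β)` over `ℝ^p`, then `β̂ = β̂'`. -/
theorem twoREG_injective {p : ℕ}
    (g h : EuclideanSpace ℝ (Fin p) → ℝ)
    (hg_concave : StrictConcaveOn ℝ Set.univ g)
    (hg_diff : Differentiable ℝ g) (hh_diff : Differentiable ℝ h)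
    (βhat βhat' : EuclideanSpace ℝ (Fin p))
    (hmax : ∃ βstar : EuclideanSpace ℝ (Fin p),
        IsMaxOn (fun β => g (β - βhat) + h β) Set.univ βstar ∧
        IsMaxOn (fun β => g (β - βhat') + h β) Set.univ βstar) :
    βhat = βhat' := by
  obtain ⟨βstar, h1, h2⟩ := hmax
  have key : ∀ b : EuclideanSpace ℝ (Fin p),
      IsMaxOn (fun β => g (β - b) + h β) Set.univ βstar →
      fderiv ℝ g (βstar - b) = -(fderiv ℝ h βstar) := by
    intro b hmaxb
    have hloc : IsLocalMax (fun β => g (β - b) + h β) βstar :=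
      hmaxb.isLocalMax (by simp [Filter.univ_mem])
    have hder : HasFDerivAt (fun β => g (β - b) + h β)
        ((fderiv ℝ g (βstar - b)) + fderiv ℝ h βstar) βstar := by
      have hg' : HasFDerivAt (fun β => g (β - b)) (fderiv ℝ g (βstar - b)) βstar := by
        have := (hg_diff (βstar - b)).hasFDerivAt.comp βstar
          ((hasFDerivAt_id βstar).sub_const b)
        simpa [Function.comp_def] using this
      exact hg'.add (hh_diff βstar).hasFDerivAt
    have := hloc.hasFDerivAt_eq_zero hder
    linear_combination (norm := module) this
  have e1 := key βhat h1
  have e2 := key βhat' h2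
  have heq : fderiv ℝ g (βstar - βhat) = fderiv ℝ g (βstar - βhat') := e1.trans e2.symm
  by_contra hne
  exact strictConcave_fderiv_injective hg_concave hg_diff
    (fun hc => hne (sub_right_injective hc)) heq
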